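/- The Action-Knowledge axiom is sound: for every state model S and state s, s satisfies [σ_i ψ⃗]□_A φ if and only if s satisfies ψ_i → ⋀{□_A [σ_j ψ⃗]φ : σ_i →_A σ_j in Σ}. -/
import Mathlib


structure StateModel (Agent Atom : Type) where
  World : Type
  rel : Agent → World → World → Prop
  val : Atom → World → Prop

/-- An epistemic proposition assigns to each state model a set of its worlds. -/
def EProp (Agent Atom : Type) := (S : StateModel Agent Atom) → Set S.World

/-- The update product `S ⊗ Σ` for a signature-based program model: action
types are `Fin n` with accessibility `srel` and preconditions `ψ`; the new
states are pairs `(s, σⱼ)` with `s ∈ ⟦ψⱼ⟧_S`, with product accessibility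
relations and valuation inherited from `S`. -/
def prodModel {Agent Atom : Type} {n : ℕ} (S : StateModel Agent Atom)
    (srel : Agent → Fin n → Fin n → Prop) (ψ : Fin n → EProp Agent Atom) :
    StateModel Agent Atom where
  World := {x : S.World × Fin n // x.1 ∈ ψ x.2 S}
  rel A x y := S.rel A x.1.1 y.1.1 ∧ srel A x.1.2 y.1.2
  val p x := S.val p x.1.1

/-- Soundness of the Action-Knowledge axiom:
`[σᵢ ψ⃗]□_A φ ↔ (ψᵢ → ⋀ {□_A [σⱼ ψ⃗]φ : σᵢ →_A σⱼ in Σ})`.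
Here `φ'` is the interpretation of an arbitrary sentence `φ` in the updated
model `S ⊗ Σ`. -/
theorem action_knowledge_sound {Agent Atom : Type} {n : ℕ}
    (S : StateModel Agent Atom) (srel : Agent → Fin n → Fin n → Prop)
    (ψ : Fin n → EProp Agent Atom) (i : Fin n) (A : Agent) (s : S.World)
    (φ' : (prodModel S srel ψ).World → Prop) :
    (∀ t : (prodModel S srel ψ).World, t.1 = (s, i) →
        ∀ t' : (prodModel S srel ψ).World, (prodModel S srel ψ).rel A t t' → φ' t')
      ↔ (s ∈ ψ i S → ∀ j : Fin n, srel A i j → ∀ s' : S.World, S.rel A s s' →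
          ∀ t' : (prodModel S srel ψ).World, t'.1 = (s', j) → φ' t') := by
  constructor
  · intro h hs j hij s' hss' t' ht'
    refine h ⟨(s,i), hs⟩ rfl t' ?_
    show S.rel A s t'.1.1 ∧ srel A i t'.1.2
    rw [ht']; exact ⟨hss', hij⟩
  · intro h t ht t' hrel
    obtain ⟨p, hp⟩ := t
    simp only at ht
    subst ht
    exact h hp t'.1.2 hrel.2 t'.1.1 hrel.1 t' rfl
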